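/- For any scoring function s and any u ∈ (0,1), the true positive rate at rate u is maximized by the posterior: β(s,u) ≤ β(η,u), where β(s,u) = P(s(X) ≥ Q(s,1−u) | Y=+1). Moreover, equality holds only if C_{s,u} = C*_u up to μ-null sets. -/

import Mathlib

open MeasureTheory Set

namespace LocalRanking

variable {Ω 𝒳 : Type*} [MeasurableSpace Ω] [MeasurableSpace 𝒳]

/-- The generalized-inverse `v`-quantile of a distribution `μ` on `ℝ`. -/
noncomputable def quantile (μ : Measure ℝ) (v : ℝ) : ℝ :=
  sInf {t : ℝ | v ≤ (μ (Iic t)).toReal}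

/-- The set `C_{s,u} = {x : s(x) ≥ Q(s, 1−u)}` of top instances at rate `u` for score `s`. -/
noncomputable def topSet (P : Measure Ω) (X : Ω → 𝒳) (s : 𝒳 → ℝ) (u : ℝ) : Set 𝒳 :=
  {x | quantile (P.map fun ω => s (X ω)) (1 - u) ≤ s x}

/-- True positive rate `β(s,u) = P(X ∈ C_{s,u} | Y=+1)`. -/
noncomputable def betaS (P : Measure Ω) (X : Ω → 𝒳) (Y : Ω → ℝ) (s : 𝒳 → ℝ) (u : ℝ) : ℝ :=
  (P {ω | X ω ∈ topSet P X s u ∧ Y ω = 1}).toReal / (P {ω | Y ω = 1}).toReal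

/-- False positive rate `α(s,u) = P(X ∈ C_{s,u} | Y=−1)`. -/
noncomputable def alphaS (P : Measure Ω) (X : Ω → 𝒳) (Y : Ω → ℝ) (s : 𝒳 → ℝ) (u : ℝ) : ℝ :=
  (P {ω | X ω ∈ topSet P X s u ∧ Y ω = -1}).toReal / (P {ω | Y ω = -1}).toReal

/-- The true positive rate at rate `u` is maximized by the posterior:
`β(s,u) ≤ β(η,u)`, with equality only if `C_{s,u} = C*_u` up to `μ`-null sets. -/
theorem posterior_maximizes_true_positive_rate
    (P : Measure Ω) [IsProbabilityMeasure P]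
    (X : Ω → 𝒳) (Y : Ω → ℝ) (η : 𝒳 → ℝ)
    (hX : Measurable X) (hY : Measurable Y) (hηm : Measurable η)
    (hYval : ∀ ω, Y ω = 1 ∨ Y ω = -1)
    (hηbd : ∀ x, η x ∈ Icc (0 : ℝ) 1)
    (hη : ∀ A : Set 𝒳, MeasurableSet A →
      (P {ω | X ω ∈ A ∧ Y ω = 1}).toReal = ∫ x in A, η x ∂(P.map X))
    (p : ℝ) (hp : p = (P {ω | Y ω = 1}).toReal) (hp01 : p ∈ Ioo (0 : ℝ) 1)
    (u : ℝ) (hu : u ∈ Ioo (0 : ℝ) 1)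
    (s : 𝒳 → ℝ) (hs : Measurable s)
    (hmass_s : ((P.map X) (topSet P X s u)).toReal = u)
    (hmass_η : ((P.map X) (topSet P X η u)).toReal = u) :
    betaS P X Y s u ≤ betaS P X Y η u ∧
      (betaS P X Y s u = betaS P X Y η u →
        (P.map X) (symmDiff (topSet P X s u) (topSet P X η u)) = 0) := by
  obtain ⟨hp0, hp1⟩ := hp01
  set μ := P.map X with hμdef
  have hμprob : IsProbabilityMeasure μ := Measure.isProbabilityMeasure_map hX.aemeasurable
  set q := quantile (P.map fun ω => η (X ω)) (1 - u) with hqdef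
  set A := topSet P X s u with hAdef
  set B := topSet P X η u with hBdef
  have hAm : MeasurableSet A := measurableSet_le measurable_const hs
  have hBm : MeasurableSet B := measurableSet_le measurable_const hηm
  have hmemB : ∀ x, x ∈ B ↔ q ≤ η x := fun x => Iff.rfl
  have hηint : Integrable η μ := by
    refine Integrable.mono' (integrable_const 1) hηm.aestronglyMeasurable ?_
    filter_upwards with x
    rw [Real.norm_eq_abs, abs_le]
    exact ⟨by linarith [(hηbd x).1], (hηbd x).2⟩
  have hfin : ∀ S : Set 𝒳, μ S ≠ ⊤ := fun S => measure_ne_top μ S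
  -- mass of the two "difference slices" agree
  have hAsplit : (μ A).toReal = (μ (A ∩ B)).toReal + (μ (A \ B)).toReal := by
    rw [← ENNReal.toReal_add (hfin _) (hfin _), measure_inter_add_diff A hBm]
  have hBsplit : (μ B).toReal = (μ (A ∩ B)).toReal + (μ (B \ A)).toReal := by
    rw [← ENNReal.toReal_add (hfin _) (hfin _), Set.inter_comm,
      measure_inter_add_diff B hAm]
  have hmass : (μ A).toReal = (μ B).toReal := by rw [hmass_s, hmass_η]
  have hm : (μ (A \ B)).toReal = (μ (B \ A)).toReal := by linarith
  -- split the integrals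
  have hintA : ∫ x in A, η x ∂μ = (∫ x in A ∩ B, η x ∂μ) + ∫ x in A \ B, η x ∂μ := by
    rw [← setIntegral_union (disjoint_sdiff_self_right.mono_left inter_subset_right)
      (hAm.diff hBm) hηint.integrableOn hηint.integrableOn, Set.inter_union_diff]
  have hintB : ∫ x in B, η x ∂μ = (∫ x in A ∩ B, η x ∂μ) + ∫ x in B \ A, η x ∂μ := by
    rw [← setIntegral_union (disjoint_sdiff_self_right.mono_left inter_subset_left)
      (hBm.diff hAm) hηint.integrableOn hηint.integrableOn, Set.inter_comm,
      Set.inter_union_diff]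
  -- Neyman–Pearson bounds
  have hub : ∫ x in A \ B, η x ∂μ ≤ q * (μ (A \ B)).toReal := by
    calc ∫ x in A \ B, η x ∂μ ≤ ∫ _x in A \ B, q ∂μ := by
          refine setIntegral_mono_on hηint.integrableOn
            (integrableOn_const (hfin _)) (hAm.diff hBm) ?_
          intro x hx
          exact le_of_lt (lt_of_not_ge (fun h => hx.2 ((hmemB x).2 h)))
      _ = q * (μ (A \ B)).toReal := by rw [setIntegral_const, smul_eq_mul, mul_comm]; rfl
  have hlb : q * (μ (B \ A)).toReal ≤ ∫ x in B \ A, η x ∂μ := by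
    calc q * (μ (B \ A)).toReal = ∫ _x in B \ A, q ∂μ := by
          rw [setIntegral_const, smul_eq_mul, mul_comm]; rfl
      _ ≤ ∫ x in B \ A, η x ∂μ := by
          refine setIntegral_mono_on
            (integrableOn_const (hfin _)) hηint.integrableOn
            (hBm.diff hAm) ?_
          intro x hx
          exact (hmemB x).1 hx.1
  have hkey : ∫ x in A, η x ∂μ ≤ ∫ x in B, η x ∂μ := by
    rw [hintA, hintB]; rw [hm] at hub; linarith
  -- rewrite betaS
  have hbA : betaS P X Y s u = (∫ x in A, η x ∂μ) / p := by
    rw [betaS, hη A hAm, ← hp]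
  have hbB : betaS P X Y η u = (∫ x in B, η x ∂μ) / p := by
    rw [betaS, hη B hBm, ← hp]
  constructor
  · rw [hbA, hbB]
    exact div_le_div_of_nonneg_right hkey hp0.le |>.trans_eq rfl
  · intro heq
    rw [hbA, hbB, div_eq_div_iff hp0.ne' hp0.ne'] at heq
    have heqI : ∫ x in A, η x ∂μ = ∫ x in B, η x ∂μ := mul_right_cancel₀ (ne_of_gt hp0) heq
    -- each slack term is zero; in particular ∫_{A\B} η = q * μ(A\B)
    have heq2 : ∫ x in A \ B, η x ∂μ = q * (μ (A \ B)).toReal := by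
      rw [hintA, hintB] at heqI; rw [hm] at hub ⊢; linarith
    have hz : ∫ x in A \ B, (q - η x) ∂μ = 0 := by
      rw [integral_sub (integrableOn_const (hfin _) : IntegrableOn (fun _ => q) (A \ B) μ)
        hηint.integrableOn, setIntegral_const, measureReal_def, smul_eq_mul, mul_comm, heq2, sub_self]
    have hnn : 0 ≤ᵐ[μ.restrict (A \ B)] fun x => q - η x := by
      filter_upwards [ae_restrict_mem (hAm.diff hBm)] with x hx
      have : η x < q := lt_of_not_ge (fun h => hx.2 ((hmemB x).2 h))
      simp only [Pi.zero_apply]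
      linarith
    have hae : (fun x => q - η x) =ᵐ[μ.restrict (A \ B)] 0 :=
      (integral_eq_zero_iff_of_nonneg_ae hnn
        ((integrableOn_const (hfin _)).sub
          hηint.integrableOn)).mp hz
    have hfalse : ∀ᵐ x ∂μ.restrict (A \ B), False := by
      filter_upwards [hae, ae_restrict_mem (hAm.diff hBm)] with x h1 h2
      have : η x < q := lt_of_not_ge (fun h => h2.2 ((hmemB x).2 h))
      simp only [Pi.zero_apply] at h1
      linarith
    have hAB0 : μ (A \ B) = 0 := by
      have : μ.restrict (A \ B) = 0 :=
        MeasureTheory.ae_eq_bot.mp (Filter.eventually_false_iff_eq_bot.mp hfalse)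
      rwa [Measure.restrict_eq_zero] at this
    have hBA0 : μ (B \ A) = 0 := by
      have h1 : (μ (B \ A)).toReal = 0 := by
        rw [← hm, hAB0]; simp
      exact (ENNReal.toReal_eq_zero_iff _).mp h1 |>.resolve_right (hfin _)
    have : μ (symmDiff A B) ≤ μ (A \ B) + μ (B \ A) := by
      rw [Set.symmDiff_def]
      exact measure_union_le _ _
    rw [hAB0, hBA0, add_zero] at this
    exact le_antisymm this zero_le

end LocalRanking
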